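/- Let M > 0 and r₀ ∈ (0, 2M). Let −∞ ≤ a < b ≤ ∞ and let γ = (t, x) : (a, b) → ℝ × ℝ³ be a C¹ curve with 0 < ‖x(s)‖ < 2M and Q_M(t'(s), x'(s), x(s)) = −1 for every s ∈ (a, b). Assume γ is inextensible at both ends: for each finite endpoint of (a, b), there is no continuous extension of γ to the interval including that endpoint whose value there has spatial part of norm strictly between 0 and 2M. Then there exists exactly one s ∈ (a, b) with ‖x(s)‖ = r₀; i.e., every inextensible unit-speed timelike curve of the interior Schwarzschild spacetime meets the hypersurface S_{r₀} := {(t,x) ∈ M_Sch : ‖x‖ = r₀} exactly once (S_{r₀} is a Cauchy surface for timelike curves). -/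

import Mathlib

/-- The Schwarzschild quadratic form of mass `M`, evaluated on a velocity `(t', x')`
at a point with spatial part `x` (where `0 < ‖x‖ < 2M`). -/
noncomputable def QM (M : ℝ) (t' : ℝ) (x' x : EuclideanSpace ℝ (Fin 3)) : ℝ :=
  (2 * M / ‖x‖ - 1) * t' ^ 2 + ‖x'‖ ^ 2
    - (2 * M / ((2 * M - ‖x‖) * ‖x‖ ^ 2)) * (inner ℝ x x' : ℝ) ^ 2

open Real Set Filter Topology

lemma QM_poly {M τ : ℝ} {x' x : EuclideanSpace ℝ (Fin 3)}
    (h1 : 0 < ‖x‖) (h2 : ‖x‖ < 2*M) (hQ : QM M τ x' x = -1) :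
    (2*M - ‖x‖)^2*‖x‖^2*τ^2 + (2*M-‖x‖)*‖x‖^3*‖x'‖^2 + (2*M-‖x‖)*‖x‖^3
      = 2*M*‖x‖*(inner ℝ x x' : ℝ)^2 := by
  set p : ℝ := inner ℝ x x' with hp
  set r : ℝ := ‖x‖ with hrr
  set v : ℝ := ‖x'‖ with hv
  rw [QM, ← hp, ← hrr, ← hv] at hQ
  have hr : r ≠ 0 := ne_of_gt h1
  have h2M : 2*M - r ≠ 0 := by intro h; nlinarith
  field_simp at hQ
  linear_combination r * hQ

lemma QM_est {M δ R τ : ℝ} {x' x : EuclideanSpace ℝ (Fin 3)} (hM : 0 < M)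
    (hδ : 0 < δ) (hR : R < 2*M)
    (h1 : δ ≤ ‖x‖) (h2 : ‖x‖ ≤ R) (hQ : QM M τ x' x = -1) :
    (2*M - R) * δ ≤ (inner ℝ x x' : ℝ)^2 ∧
    (2*M - R)^2 * τ^2 ≤ (inner ℝ x x' : ℝ)^2 ∧
    ((2*M - R)*δ^2) * ‖x'‖^2 ≤ 2*M*(inner ℝ x x' : ℝ)^2 := by
  have h1' : 0 < ‖x‖ := lt_of_lt_of_le hδ h1
  have h2' : ‖x‖ < 2*M := lt_of_le_of_lt h2 hR
  have hpoly := QM_poly h1' h2' hQ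
  set p : ℝ := inner ℝ x x' with hp
  set r : ℝ := ‖x‖ with hrr
  set v : ℝ := ‖x'‖ with hv
  have hCS : p^2 ≤ r^2 * v^2 := by
    have h := abs_real_inner_le_norm x x'
    rw [← hp, ← hrr, ← hv] at h
    nlinarith [abs_nonneg p, sq_abs p, norm_nonneg x, norm_nonneg x']
  have hv0 : 0 ≤ v := norm_nonneg x'
  have h2Mr : 0 < 2*M - r := by linarith
  have h2MR : 0 < 2*M - R := by linarith
  have hr2 : (0:ℝ) < r^2 := by positivity
  have hA : 0 ≤ (2*M-r)^2*r^2*τ^2 := by positivity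
  have hB : (2*M-r)*r*p^2 ≤ (2*M-r)*r^3*v^2 := by
    nlinarith [mul_le_mul_of_nonneg_left hCS (mul_nonneg h2Mr.le h1'.le)]
  have hkey : (2*M - r)*r ≤ p^2 :=
    le_of_mul_le_mul_right (by nlinarith [hpoly, hA, hB]) hr2
  have hC : 0 ≤ (2*M-r)*r^3 := by positivity
  have hkey2 : (2*M - r)^2*τ^2 ≤ p^2 :=
    le_of_mul_le_mul_right (by nlinarith [hpoly, hB, hC]) hr2
  have hkey3 : (2*M - r)*r^2*v^2 ≤ 2*M*p^2 :=
    le_of_mul_le_mul_right (by nlinarith [hpoly, hA, hC]) h1'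
  have c1 : (2*M-R)*δ ≤ (2*M-r)*r := mul_le_mul (by linarith) h1 hδ.le h2Mr.le
  have c2 : (2*M-R)^2 ≤ (2*M-r)^2 := pow_le_pow_left₀ h2MR.le (by linarith) 2
  have c3 : (2*M-R)*δ^2 ≤ (2*M-r)*r^2 :=
    mul_le_mul (by linarith) (pow_le_pow_left₀ hδ.le h1 2) (by positivity) h2Mr.le
  have c2' := mul_le_mul_of_nonneg_right c2 (sq_nonneg τ)
  have c3' := mul_le_mul_of_nonneg_right c3 (sq_nonneg v)
  exact ⟨le_trans c1 hkey, le_trans c2' hkey2, le_trans c3' hkey3⟩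

lemma hasDerivAt_norm_curve {x : ℝ → EuclideanSpace ℝ (Fin 3)} {w : EuclideanSpace ℝ (Fin 3)}
    {s : ℝ} (hx : HasDerivAt x w s) (h0 : 0 < ‖x s‖) :
    HasDerivAt (fun σ => ‖x σ‖) ((inner ℝ (x s) w : ℝ) / ‖x s‖) s := by
  have h1 : (fun σ => ‖x σ‖) = fun σ => Real.sqrt (inner ℝ (x σ) (x σ) : ℝ) := by
    funext σ
    rw [real_inner_self_eq_norm_mul_norm, Real.sqrt_mul_self (norm_nonneg _)]
  have h2 : HasDerivAt (fun σ => (inner ℝ (x σ) (x σ) : ℝ)) (2 * (inner ℝ (x s) w : ℝ)) s := by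
    have h := hx.inner ℝ hx
    exact h.congr_deriv (by rw [real_inner_comm (x s) w]; ring)
  have h3 : (inner ℝ (x s) (x s) : ℝ) ≠ 0 := by
    rw [real_inner_self_eq_norm_mul_norm]; positivity
  have h4 := h2.sqrt h3
  rw [h1]
  convert h4 using 1
  rw [real_inner_self_eq_norm_mul_norm, Real.sqrt_mul_self (norm_nonneg _)]
  ring

set_option maxHeartbeats 1000000 in
/-- Core endpoint lemma: under an increasing "radius" toward the right endpoint `b`,
the endpoint is finite and the curve extends continuously. -/
lemma core (M : ℝ) (hM : 0 < M) (δ R : ℝ) (hδ : 0 < δ) (hR : R < 2*M) (hδR : δ ≤ R)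
    (b : EReal) (s₀ : ℝ) (hs₀b : (s₀ : EReal) < b)
    (t t' : ℝ → ℝ) (x x' : ℝ → EuclideanSpace ℝ (Fin 3)) (ε : ℝ) (hε : ε = 1 ∨ ε = -1)
    (H : ∀ s : ℝ, s₀ < s → (s : EReal) < b →
      HasDerivAt t (t' s) s ∧ HasDerivAt x (x' s) s ∧
      δ ≤ ‖x s‖ ∧ ‖x s‖ ≤ R ∧ QM M (t' s) (x' s) (x s) = -1 ∧
      0 ≤ ε * (inner ℝ (x s) (x' s) : ℝ)) :
    ∃ bR : ℝ, b = (bR : EReal) ∧ ∃ L : ℝ × EuclideanSpace ℝ (Fin 3),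
      Tendsto (fun s => (t s, x s)) (𝓝[Set.Ioo s₀ bR] bR) (𝓝 L) ∧
      δ ≤ ‖L.2‖ ∧ ‖L.2‖ ≤ R := by
  have hR2M : 0 < 2*M - R := by linarith
  have hR0 : 0 < R := lt_of_lt_of_le hδ hδR
  have hε1 : |ε| = 1 := by rcases hε with h|h <;> simp [h]
  set c : ℝ := Real.sqrt ((2*M-R)*δ) / R with hc_def
  have hc : 0 < c := by
    apply div_pos _ hR0
    exact Real.sqrt_pos.2 (by positivity)
  set K : ℝ := Real.sqrt (2*M/((2*M-R)*δ^2)) with hK_def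
  have hK0 : 0 ≤ K := Real.sqrt_nonneg _
  set C : ℝ := R/(2*M-R) + K * R with hC_def
  have hC0 : 0 ≤ C := by
    rw [hC_def]
    have := div_nonneg hR0.le hR2M.le
    nlinarith
  set u : ℝ → ℝ := fun s => ε * ‖x s‖ with hu_def
  set u' : ℝ → ℝ := fun s => ε * ((inner ℝ (x s) (x' s) : ℝ) / ‖x s‖) with hu'_def
  have hfacts : ∀ s : ℝ, s₀ < s → (s : EReal) < b →
      HasDerivAt u (u' s) s ∧ c ≤ u' s ∧
      δ ≤ ‖x s‖ ∧ ‖x s‖ ≤ R ∧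
      HasDerivAt (fun σ => (t σ, x σ)) ((t' s, x' s)) s ∧
      ‖((t' s, x' s) : ℝ × EuclideanSpace ℝ (Fin 3))‖ ≤ C * u' s := by
    intro s hs1 hs2
    obtain ⟨hdt, hdx, hδs, hRs, hQs, hps⟩ := H s hs1 hs2
    have hxpos : 0 < ‖x s‖ := lt_of_lt_of_le hδ hδs
    obtain ⟨e1, e2, e3⟩ := QM_est hM hδ hR hδs hRs hQs
    set p : ℝ := inner ℝ (x s) (x' s) with hp_def
    have habs : ε * p = |p| := by
      have h1 : |ε * p| = |p| := by rw [abs_mul, hε1, one_mul]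
      rw [← h1, abs_of_nonneg hps]
    have hu'val : u' s = |p| / ‖x s‖ := by
      rw [hu'_def]; dsimp only; rw [← hp_def, ← mul_div_assoc, habs]
    have hder : HasDerivAt u (u' s) s := by
      have := (hasDerivAt_norm_curve hdx hxpos).const_mul ε
      rw [hu'_def]; exact this
    have hsqrtp : Real.sqrt ((2*M-R)*δ) ≤ |p| := by
      have h := Real.sqrt_le_sqrt e1
      rwa [Real.sqrt_sq_eq_abs] at h
    have hclb : c ≤ u' s := by
      rw [hu'val, hc_def]
      exact div_le_div₀ (abs_nonneg p) hsqrtp hxpos hRs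
    have ht'_bound : |t' s| ≤ R/(2*M-R) * u' s := by
      have h2 : (2*M-R) * |t' s| ≤ |p| := by
        have h := Real.sqrt_le_sqrt e2
        rwa [show (2*M-R)^2*(t' s)^2 = ((2*M-R)*|t' s|)^2 by
          rw [mul_pow, sq_abs], Real.sqrt_sq (by positivity), Real.sqrt_sq_eq_abs] at h
      rw [hu'val, div_mul_div_comm, le_div_iff₀ (by positivity)]
      nlinarith [abs_nonneg p, abs_nonneg (t' s)]
    have hx'_bound : ‖x' s‖ ≤ K * R * u' s := by
      have hv2 : ‖x' s‖^2 ≤ (2*M/((2*M-R)*δ^2)) * p^2 := by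
        rw [div_mul_eq_mul_div, le_div_iff₀ (by positivity)]
        nlinarith [e3]
      have h3 : ‖x' s‖ ≤ K * |p| := by
        calc ‖x' s‖ = Real.sqrt (‖x' s‖^2) := (Real.sqrt_sq (norm_nonneg _)).symm
        _ ≤ Real.sqrt ((2*M/((2*M-R)*δ^2)) * p^2) := Real.sqrt_le_sqrt hv2
        _ = K * |p| := by rw [Real.sqrt_mul (by positivity), Real.sqrt_sq_eq_abs]
      calc ‖x' s‖ ≤ K * |p| := h3
      _ = K * (‖x s‖ * (|p| / ‖x s‖)) := by rw [mul_div_cancel₀ _ (ne_of_gt hxpos)]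
      _ ≤ K * (R * (|p| / ‖x s‖)) :=
          mul_le_mul_of_nonneg_left
            (mul_le_mul_of_nonneg_right hRs (by positivity)) hK0
      _ = K * R * u' s := by rw [hu'val]; ring
    refine ⟨hder, hclb, hδs, hRs, hdt.prodMk hdx, ?_⟩
    rw [Prod.norm_def]
    have hu'0 : 0 ≤ u' s := le_trans hc.le hclb
    apply max_le
    · calc ‖t' s‖ = |t' s| := Real.norm_eq_abs _
      _ ≤ R/(2*M-R) * u' s := ht'_bound
      _ ≤ C * u' s :=
          mul_le_mul_of_nonneg_right
            (by rw [hC_def]; exact le_add_of_nonneg_right (mul_nonneg hK0 hR0.le)) hu'0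
    · calc ‖x' s‖ ≤ K * R * u' s := hx'_bound
      _ ≤ C * u' s :=
          mul_le_mul_of_nonneg_right
            (by rw [hC_def]; exact le_add_of_nonneg_left (div_nonneg hR0.le hR2M.le)) hu'0
  -- monotonicity / growth via MVT
  have grow : ∀ s₁ s₂ : ℝ, s₀ < s₁ → s₁ < s₂ → (s₂ : EReal) < b →
      c * (s₂ - s₁) ≤ u s₂ - u s₁ := by
    intro s₁ s₂ h1 h12 h2b
    have hsub : ∀ σ ∈ Icc s₁ s₂, s₀ < σ ∧ (σ : EReal) < b := by
      intro σ hσ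
      refine ⟨lt_of_lt_of_le h1 hσ.1, lt_of_le_of_lt ?_ h2b⟩
      exact_mod_cast EReal.coe_le_coe_iff.2 hσ.2
    obtain ⟨ξ, hξ, hslope⟩ := exists_hasDerivAt_eq_slope u u' h12
      (fun σ hσ => ((hfacts σ (hsub σ hσ).1 (hsub σ hσ).2).1).continuousAt.continuousWithinAt)
      (fun σ hσ => (hfacts σ (hsub σ (Ioo_subset_Icc_self hσ)).1
        (hsub σ (Ioo_subset_Icc_self hσ)).2).1)
    have hcξ : c ≤ u' ξ :=
      (hfacts ξ (hsub ξ (Ioo_subset_Icc_self hξ)).1 (hsub ξ (Ioo_subset_Icc_self hξ)).2).2.1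
    rw [hslope] at hcξ
    have := (le_div_iff₀ (by linarith : (0:ℝ) < s₂ - s₁)).1 hcξ
    linarith
  have hubd : ∀ s : ℝ, s₀ < s → (s : EReal) < b → -R ≤ u s ∧ u s ≤ R := by
    intro s h1 h2
    have hRs := (hfacts s h1 h2).2.2.2.1
    have : |u s| = ‖x s‖ := by rw [hu_def]; dsimp only; rw [abs_mul, hε1, one_mul, abs_norm]
    constructor
    · nlinarith [neg_abs_le (u s), this ▸ hRs]
    · nlinarith [le_abs_self (u s), this ▸ hRs]
  cases b with
  | bot => exact absurd hs₀b (by simp)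
  | top =>
    exfalso
    set s₁ : ℝ := s₀ + 1 with hs₁
    set s₂ : ℝ := s₀ + 1 + (2*R+1)/c with hs₂
    have h12 : s₁ < s₂ := by
      rw [hs₁, hs₂]
      have : 0 < (2*R+1)/c := by positivity
      linarith
    have hg := grow s₁ s₂ (by rw [hs₁]; linarith) h12 (EReal.coe_lt_top s₂)
    have hcs : c * (s₂ - s₁) = 2*R+1 := by
      rw [hs₁, hs₂]
      field_simp
      ring
    have hb1 := (hubd s₁ (by rw [hs₁]; linarith) (EReal.coe_lt_top s₁)).1
    have hs₀s₂ : s₀ < s₂ := by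
      rw [hs₂]
      have h : 0 < (2*R+1)/c := by positivity
      linarith
    have hb2 := (hubd s₂ hs₀s₂ (EReal.coe_lt_top s₂)).2
    linarith
  | coe bR =>
    refine ⟨bR, rfl, ?_⟩
    have hs₀bR : s₀ < bR := EReal.coe_lt_coe_iff.1 hs₀b
    set J := Ioo s₀ bR with hJ
    have hmemJ : ∀ σ ∈ J, s₀ < σ ∧ (σ : EReal) < (bR : EReal) := fun σ hσ =>
      ⟨hσ.1, EReal.coe_lt_coe_iff.2 hσ.2⟩
    have hmono : ∀ s₁ ∈ J, ∀ s₂ ∈ J, s₁ ≤ s₂ → u s₁ ≤ u s₂ := by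
      intro s₁ h1 s₂ h2 h12
      rcases eq_or_lt_of_le h12 with rfl | hlt
      · exact le_refl _
      · have := grow s₁ s₂ (hmemJ s₁ h1).1 hlt (hmemJ s₂ h2).2
        nlinarith [mul_nonneg hc.le (by linarith : (0:ℝ) ≤ s₂ - s₁)]
    have hcomp : ∀ s₁ ∈ J, ∀ s₂ ∈ J, s₁ ≤ s₂ →
        ‖((t s₂, x s₂) : ℝ × EuclideanSpace ℝ (Fin 3)) - (t s₁, x s₁)‖
          ≤ C * (u s₂ - u s₁) := by
      intro s₁ h1 s₂ h2 h12
      have hsubJ : Icc s₁ s₂ ⊆ J := fun σ hσ =>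
        ⟨lt_of_lt_of_le h1.1 hσ.1, lt_of_le_of_lt hσ.2 h2.2⟩
      have hf : ∀ σ ∈ Icc s₁ s₂, HasDerivAt u (u' σ) σ ∧
          HasDerivAt (fun σ => ((t σ, x σ) : ℝ × EuclideanSpace ℝ (Fin 3))) (t' σ, x' σ) σ ∧
          ‖((t' σ, x' σ) : ℝ × EuclideanSpace ℝ (Fin 3))‖ ≤ C * u' σ := by
        intro σ hσ
        obtain ⟨a1, _, _, _, a5, a6⟩ := hfacts σ (hmemJ σ (hsubJ hσ)).1 (hmemJ σ (hsubJ hσ)).2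
        exact ⟨a1, a5, a6⟩
      have key := image_norm_le_of_norm_deriv_right_le_deriv_boundary'
        (f := fun σ => ((t σ, x σ) : ℝ × EuclideanSpace ℝ (Fin 3)) - (t s₁, x s₁))
        (f' := fun σ => (t' σ, x' σ)) (a := s₁) (b := s₂)
        (fun σ hσ => (((hf σ hσ).2.1).sub_const _).continuousAt.continuousWithinAt)
        (fun σ hσ => (((hf σ (Ico_subset_Icc_self hσ)).2.1).sub_const _).hasDerivWithinAt)
        (B := fun σ => C * u σ - C * u s₁) (B' := fun σ => C * u' σ)
        (by simp)
        (fun σ hσ => ((((hf σ hσ).1).const_mul C).sub_const _).continuousAt.continuousWithinAt)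
        (fun σ hσ => ((((hf σ (Ico_subset_Icc_self hσ)).1).const_mul C).sub_const _).hasDerivWithinAt)
        (fun σ hσ => (hf σ (Ico_subset_Icc_self hσ)).2.2)
      have h' : ‖((t s₂, x s₂) : ℝ × EuclideanSpace ℝ (Fin 3)) - (t s₁, x s₁)‖
          ≤ C * u s₂ - C * u s₁ := key (right_mem_Icc.2 h12)
      linarith
    have hfil : 𝓝[J] bR = 𝓝[<] bR := by
      apply nhdsWithin_eq_nhdsWithin' (Ioi_mem_nhds hs₀bR)
      ext σ
      simp only [hJ, mem_inter_iff, mem_Ioo, mem_Ioi, mem_Iio]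
      tauto
    haveI hNB : (𝓝[J] bR).NeBot := by rw [hfil]; infer_instance
    have hJne : (u '' J).Nonempty :=
      ⟨u ((s₀+bR)/2), mem_image_of_mem _ (by rw [hJ, mem_Ioo]; constructor <;> linarith)⟩
    have hbddA : BddAbove (u '' J) := by
      refine ⟨R, ?_⟩
      rintro _ ⟨σ, hσ, rfl⟩
      exact (hubd σ (hmemJ σ hσ).1 (hmemJ σ hσ).2).2
    set ℓ := sSup (u '' J) with hℓ
    have hcauchy : Cauchy (map (fun s => ((t s, x s) : ℝ × EuclideanSpace ℝ (Fin 3)))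
        (𝓝[J] bR)) := by
      rw [Metric.cauchy_iff]
      refine ⟨Filter.NeBot.map hNB _, fun e he => ?_⟩
      set d : ℝ := e/(2*(C+1)) with hd
      have he' : 0 < d := by positivity
      have hde : (2*(C+1))*d = e := by rw [hd]; field_simp
      obtain ⟨w, hwmem, hw⟩ := exists_lt_of_lt_csSup hJne (show ℓ - d < ℓ by linarith)
      obtain ⟨s₁, hs₁J, rfl⟩ := hwmem
      refine ⟨(fun s => ((t s, x s) : ℝ × EuclideanSpace ℝ (Fin 3))) '' (Ioo s₁ bR), ?_, ?_⟩
      · apply image_mem_map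
        rw [hfil]
        exact Ioo_mem_nhdsLT hs₁J.2
      · have hkey : ∀ σ₁ ∈ Ioo s₁ bR, ∀ σ₂ ∈ Ioo s₁ bR, σ₁ ≤ σ₂ →
            dist ((t σ₂, x σ₂) : ℝ × EuclideanSpace ℝ (Fin 3)) (t σ₁, x σ₁) < e := by
          intro σ₁ h1 σ₂ h2 h12
          have h1J : σ₁ ∈ J := ⟨hs₁J.1.trans h1.1, h1.2⟩
          have h2J : σ₂ ∈ J := ⟨hs₁J.1.trans h2.1, h2.2⟩
          have hb1 : u σ₂ ≤ ℓ := le_csSup hbddA (mem_image_of_mem _ h2J)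
          have hb2 : ℓ - d < u σ₁ := lt_of_lt_of_le hw (hmono s₁ hs₁J σ₁ h1J h1.1.le)
          rw [dist_eq_norm]
          calc ‖((t σ₂, x σ₂) : ℝ × EuclideanSpace ℝ (Fin 3)) - (t σ₁, x σ₁)‖
              ≤ C * (u σ₂ - u σ₁) := hcomp σ₁ h1J σ₂ h2J h12
          _ ≤ C * d := by nlinarith
          _ < e := by nlinarith
        rintro _ ⟨σ₁, h1, rfl⟩ _ ⟨σ₂, h2, rfl⟩
        rcases le_total σ₁ σ₂ with h | h
        · rw [dist_comm]; exact hkey σ₁ h1 σ₂ h2 h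
        · exact hkey σ₂ h2 σ₁ h1 h
    obtain ⟨L, hL⟩ := cauchy_map_iff_exists_tendsto.1 hcauchy
    have hx2 : Tendsto (fun s => x s) (𝓝[J] bR) (𝓝 L.2) := (continuous_snd.tendsto L).comp hL
    have h2 : Tendsto (fun s => ‖x s‖) (𝓝[J] bR) (𝓝 ‖L.2‖) := hx2.norm
    refine ⟨L, hL, ?_, ?_⟩
    · exact ge_of_tendsto h2 (eventually_nhdsWithin_of_forall
        (fun σ hσ => (hfacts σ (hmemJ σ hσ).1 (hmemJ σ hσ).2).2.2.1))
    · exact le_of_tendsto h2 (eventually_nhdsWithin_of_forall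
        (fun σ hσ => (hfacts σ (hmemJ σ hσ).1 (hmemJ σ hσ).2).2.2.2.1))


lemma QM_neg (M τ : ℝ) (w y : EuclideanSpace ℝ (Fin 3)) : QM M (-τ) (-w) y = QM M τ w y := by
  rw [QM, QM, norm_neg, inner_neg_right]
  ring

lemma hasDerivAt_comp_neg {F : Type*} [NormedAddCommGroup F] [NormedSpace ℝ F]
    {f : ℝ → F} {f' : F} {s : ℝ} (h : HasDerivAt f f' (-s)) :
    HasDerivAt (fun σ => f (-σ)) (-f') s := by
  have hneg : HasDerivAt (fun σ : ℝ => -σ) (-1 : ℝ) s := by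
    exact hasDerivAt_neg' (x := s)
  have h2 := h.scomp s hneg
  exact h2.congr_deriv (by simp)

set_option maxHeartbeats 1000000 in
/-- Let `M > 0` and `r₀ ∈ (0, 2M)`. Let `−∞ ≤ a < b ≤ ∞` and let
`γ = (t, x) : (a, b) → ℝ × ℝ³` be a C¹ curve with `0 < ‖x(s)‖ < 2M` and
`Q_M(t'(s), x'(s), x(s)) = −1` for every `s ∈ (a, b)`. Assume `γ` is inextensible at
both ends: for each finite endpoint of `(a, b)`, there is no continuous extension of
`γ` to the interval including that endpoint whose value there has spatial part of
norm strictly between `0` and `2M`. Then there exists exactly one `s ∈ (a, b)` with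
`‖x(s)‖ = r₀`; i.e., every inextensible unit-speed timelike curve of the interior
Schwarzschild spacetime meets the hypersurface `S_{r₀}` exactly once
(`S_{r₀}` is a Cauchy surface for timelike curves). -/
theorem inextensible_timelike_meets_cauchy_surface_once (M : ℝ) (hM : 0 < M)
    (r₀ : ℝ) (hr₀ : 0 < r₀) (hr₀' : r₀ < 2 * M)
    (a b : EReal) (hab : a < b)
    (t t' : ℝ → ℝ) (x x' : ℝ → EuclideanSpace ℝ (Fin 3))
    (ht : ∀ s : ℝ, a < (s : EReal) → (s : EReal) < b →
      HasDerivWithinAt t (t' s) {σ : ℝ | a < (σ : EReal) ∧ (σ : EReal) < b} s)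
    (hx : ∀ s : ℝ, a < (s : EReal) → (s : EReal) < b →
      HasDerivWithinAt x (x' s) {σ : ℝ | a < (σ : EReal) ∧ (σ : EReal) < b} s)
    (ht'c : ContinuousOn t' {σ : ℝ | a < (σ : EReal) ∧ (σ : EReal) < b})
    (hx'c : ContinuousOn x' {σ : ℝ | a < (σ : EReal) ∧ (σ : EReal) < b})
    (hr : ∀ s : ℝ, a < (s : EReal) → (s : EReal) < b → 0 < ‖x s‖ ∧ ‖x s‖ < 2 * M)
    (hQ : ∀ s : ℝ, a < (s : EReal) → (s : EReal) < b → QM M (t' s) (x' s) (x s) = -1)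
    (hinext_b : ∀ bR : ℝ, b = (bR : EReal) →
      ¬ ∃ γ' : ℝ → ℝ × EuclideanSpace ℝ (Fin 3),
        ContinuousOn γ' (insert bR {σ : ℝ | a < (σ : EReal) ∧ (σ : EReal) < b}) ∧
        (∀ s : ℝ, a < (s : EReal) → (s : EReal) < b → γ' s = (t s, x s)) ∧
        0 < ‖(γ' bR).2‖ ∧ ‖(γ' bR).2‖ < 2 * M)
    (hinext_a : ∀ aR : ℝ, a = (aR : EReal) →
      ¬ ∃ γ' : ℝ → ℝ × EuclideanSpace ℝ (Fin 3),
        ContinuousOn γ' (insert aR {σ : ℝ | a < (σ : EReal) ∧ (σ : EReal) < b}) ∧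
        (∀ s : ℝ, a < (s : EReal) → (s : EReal) < b → γ' s = (t s, x s)) ∧
        0 < ‖(γ' aR).2‖ ∧ ‖(γ' aR).2‖ < 2 * M) :
    ∃! s : ℝ, (a < (s : EReal) ∧ (s : EReal) < b) ∧ ‖x s‖ = r₀ := by
  classical
  set I : Set ℝ := {σ : ℝ | a < (σ : EReal) ∧ (σ : EReal) < b} with hI_def
  have hIopen : IsOpen I := by
    have h1 : IsOpen {σ : ℝ | a < (σ : EReal)} :=
      isOpen_Ioi.preimage continuous_coe_real_ereal
    have h2 : IsOpen {σ : ℝ | (σ : EReal) < b} :=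
      isOpen_Iio.preimage continuous_coe_real_ereal
    exact h1.inter h2
  have hIcc : ∀ {s₁ s₂ : ℝ}, s₁ ∈ I → s₂ ∈ I → Icc s₁ s₂ ⊆ I := by
    intro s₁ s₂ h1 h2 σ hσ
    exact ⟨lt_of_lt_of_le h1.1 (EReal.coe_le_coe_iff.2 hσ.1),
      lt_of_le_of_lt (EReal.coe_le_coe_iff.2 hσ.2) h2.2⟩
  have hIconn : IsPreconnected I := by
    apply Set.OrdConnected.isPreconnected
    exact ⟨fun s₁ h1 s₂ h2 => hIcc h1 h2⟩
  obtain ⟨s₀, hs₀a, hs₀b⟩ := EReal.exists_between_coe_real hab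
  have hs₀I : s₀ ∈ I := ⟨hs₀a, hs₀b⟩
  have hder : ∀ s ∈ I, HasDerivAt t (t' s) s ∧ HasDerivAt x (x' s) s := fun s hs =>
    ⟨(ht s hs.1 hs.2).hasDerivAt (hIopen.mem_nhds hs),
     (hx s hs.1 hs.2).hasDerivAt (hIopen.mem_nhds hs)⟩
  set p : ℝ → ℝ := fun s => (inner ℝ (x s) (x' s) : ℝ) with hp_def
  have hpne : ∀ s ∈ I, p s ≠ 0 := by
    intro s hs h0
    obtain ⟨hr1, hr2⟩ := hr s hs.1 hs.2
    obtain ⟨e1, -, -⟩ := QM_est hM hr1 hr2 (le_refl ‖x s‖) (le_refl ‖x s‖) (hQ s hs.1 hs.2)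
    rw [hp_def] at h0
    dsimp only at h0
    rw [h0] at e1
    nlinarith [e1, hr1, hr2]
  have hxc : ContinuousOn x I := fun s hs => ((hder s hs).2).continuousAt.continuousWithinAt
  have hpc : ContinuousOn p I := ContinuousOn.inner hxc hx'c
  set ε : ℝ := if 0 < p s₀ then 1 else -1 with hε_def
  have hε : ε = 1 ∨ ε = -1 := by
    rw [hε_def]; split_ifs <;> simp
  have hεs₀ : 0 < ε * p s₀ := by
    rw [hε_def]
    split_ifs with h
    · simpa using h
    · have := hpne s₀ hs₀I
      have h2 : p s₀ < 0 := lt_of_le_of_ne (not_lt.1 h) this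
      nlinarith
  have hsign : ∀ s ∈ I, 0 < ε * p s := by
    intro s hs
    rcases lt_trichotomy (ε * p s) 0 with hneg | hzero | hpos
    · exfalso
      have hcont : ContinuousOn (fun σ => ε * p σ) I := continuousOn_const.mul hpc
      have himg := hIconn.intermediate_value hs hs₀I hcont
      obtain ⟨σ, hσI, hσ0⟩ := himg ⟨hneg.le, hεs₀.le⟩
      have hσ0' : ε * p σ = 0 := hσ0
      have : p σ = 0 := by
        rcases hε with h | h <;> rw [h] at hσ0' <;> linarith
      exact hpne σ hσI this
    · exfalso
      have : p s = 0 := by rcases hε with h | h <;> rw [h] at hzero <;> linarith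
      exact hpne s hs this
    · exact hpos
  have hrd : ∀ s ∈ I, HasDerivAt (fun σ => ‖x σ‖) (p s / ‖x s‖) s := fun s hs =>
    hasDerivAt_norm_curve (hder s hs).2 (hr s hs.1 hs.2).1
  have hmvt : ∀ s₁ s₂ : ℝ, s₁ ∈ I → s₂ ∈ I → s₁ < s₂ →
      ∃ ξ ∈ Ioo s₁ s₂, p ξ / ‖x ξ‖ = (‖x s₂‖ - ‖x s₁‖) / (s₂ - s₁) := by
    intro s₁ s₂ h1 h2 h12
    have hsub := hIcc h1 h2
    exact exists_hasDerivAt_eq_slope _ _ h12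
      (fun σ hσ => (hrd σ (hsub hσ)).continuousAt.continuousWithinAt)
      (fun σ hσ => hrd σ (hsub (Ioo_subset_Icc_self hσ)))
  have huniq : ∀ s₁ ∈ I, ∀ s₂ ∈ I, ‖x s₁‖ = r₀ → ‖x s₂‖ = r₀ → s₁ = s₂ := by
    have key : ∀ s₁ ∈ I, ∀ s₂ ∈ I, s₁ < s₂ → ‖x s₁‖ = r₀ → ‖x s₂‖ = r₀ → False := by
      intro s₁ h1 s₂ h2 h12 e1 e2
      obtain ⟨ξ, hξ, hslope⟩ := hmvt s₁ s₂ h1 h2 h12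
      have hξI : ξ ∈ I := hIcc h1 h2 (Ioo_subset_Icc_self hξ)
      rw [e1, e2, sub_self, zero_div] at hslope
      have : p ξ = 0 := by
        have hx0 : (0:ℝ) < ‖x ξ‖ := (hr ξ hξI.1 hξI.2).1
        field_simp at hslope
        simpa using hslope
      exact hpne ξ hξI this
    intro s₁ h1 s₂ h2 e1 e2
    rcases lt_trichotomy s₁ s₂ with h | h | h
    · exact absurd (key s₁ h1 s₂ h2 h e1 e2) (by simp)
    · exact h
    · exact absurd (key s₂ h2 s₁ h1 h e2 e1) (by simp)
  have hmono : ∀ s₁ ∈ I, ∀ s₂ ∈ I, s₁ < s₂ → ε * ‖x s₁‖ < ε * ‖x s₂‖ := by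
    intro s₁ h1 s₂ h2 h12
    obtain ⟨ξ, hξ, hslope⟩ := hmvt s₁ s₂ h1 h2 h12
    have hξI : ξ ∈ I := hIcc h1 h2 (Ioo_subset_Icc_self hξ)
    have hx0 : (0:ℝ) < ‖x ξ‖ := (hr ξ hξI.1 hξI.2).1
    have hp0 : 0 < ε * p ξ := hsign ξ hξI
    have hslope' : ε * (p ξ / ‖x ξ‖) * (s₂ - s₁) = ε * (‖x s₂‖ - ‖x s₁‖) := by
      rw [hslope]
      field_simp [sub_ne_zero.2 h12.ne']
    have hpos : 0 < ε * (p ξ / ‖x ξ‖) := by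
      rw [← mul_div_assoc]
      exact div_pos hp0 hx0
    nlinarith [hslope', hpos, h12]
  -- endpoint contradictions
  have hcoreB : ∀ δ R : ℝ, 0 < δ → R < 2*M → δ ≤ R →
      (∀ s : ℝ, s₀ < s → (s : EReal) < b → δ ≤ ‖x s‖ ∧ ‖x s‖ ≤ R) → False := by
    intro δ R hδ hR2 hδR hbound
    have hmemI : ∀ s : ℝ, s₀ < s → (s : EReal) < b → s ∈ I := fun s h1 h2 =>
      ⟨hs₀a.trans (EReal.coe_lt_coe_iff.2 h1), h2⟩
    obtain ⟨bR, hbR, L, hLt, hL1, hL2⟩ := core M hM δ R hδ hR2 hδR b s₀ hs₀b t t' x x' ε hε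
      (fun s hs1 hs2 => ⟨(hder s (hmemI s hs1 hs2)).1, (hder s (hmemI s hs1 hs2)).2,
        (hbound s hs1 hs2).1, (hbound s hs1 hs2).2,
        hQ s (hmemI s hs1 hs2).1 (hmemI s hs1 hs2).2, (hsign s (hmemI s hs1 hs2)).le⟩)
    have hs₀bR : s₀ < bR := by
      rw [hbR] at hs₀b; exact EReal.coe_lt_coe_iff.1 hs₀b
    have hbRnotI : bR ∉ I := fun h => absurd h.2 (by rw [hbR]; exact lt_irrefl _)
    have hIooI : Ioo s₀ bR ⊆ I := fun σ hσ =>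
      ⟨hs₀a.trans (EReal.coe_lt_coe_iff.2 hσ.1), by rw [hbR]; exact EReal.coe_lt_coe_iff.2 hσ.2⟩
    have hfil2 : 𝓝[I] bR = 𝓝[Ioo s₀ bR] bR := by
      apply nhdsWithin_eq_nhdsWithin' (Ioi_mem_nhds hs₀bR)
      ext σ
      simp only [mem_inter_iff, mem_setOf_eq, mem_Ioi, mem_Ioo]
      constructor
      · rintro ⟨⟨h1, h2⟩, h3⟩
        rw [hbR] at h2
        exact ⟨⟨h3, EReal.coe_lt_coe_iff.1 h2⟩, h3⟩
      · rintro ⟨⟨h1, h2⟩, h3⟩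
        exact ⟨(hIooI ⟨h1, h2⟩ : σ ∈ I), h3⟩
    set γ' : ℝ → ℝ × EuclideanSpace ℝ (Fin 3) :=
      Function.update (fun s => ((t s, x s) : ℝ × EuclideanSpace ℝ (Fin 3))) bR L with hγ'
    have hγ'eq : ∀ σ ∈ I, γ' σ = (t σ, x σ) := by
      intro σ hσ
      rw [hγ']
      exact Function.update_of_ne (fun hh => hbRnotI (by rw [← hh]; exact hσ)) _ _
    apply hinext_b bR hbR
    refine ⟨γ', ?_, (fun s h1 h2 => hγ'eq s ⟨h1, h2⟩), ?_, ?_⟩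
    · intro σ hσ
      rcases eq_or_ne σ bR with rfl | hne
      · rw [continuousWithinAt_insert_self]
        have hup : γ' σ = L := Function.update_self _ _ _
        unfold ContinuousWithinAt
        rw [hfil2, hup]
        apply hLt.congr'
        filter_upwards [self_mem_nhdsWithin] with τ hτ
        exact (hγ'eq τ (hIooI hτ)).symm
      · have hσI : σ ∈ I := hσ.resolve_left hne
        have hca : ContinuousAt (fun s => ((t s, x s) : ℝ × EuclideanSpace ℝ (Fin 3))) σ :=
          ((hder σ hσI).1.prodMk (hder σ hσI).2).continuousAt
        exact (hca.congr (eventually_of_mem (hIopen.mem_nhds hσI)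
          (fun τ hτ => (hγ'eq τ hτ).symm))).continuousWithinAt
    · rw [hγ', Function.update_self]; linarith
    · rw [hγ', Function.update_self]; linarith
  have hcoreA : ∀ δ R : ℝ, 0 < δ → R < 2*M → δ ≤ R →
      (∀ s : ℝ, a < (s : EReal) → s < s₀ → δ ≤ ‖x s‖ ∧ ‖x s‖ ≤ R) → False := by
    intro δ R hδ hR2 hδR hbound
    have hmemI : ∀ s : ℝ, a < (s : EReal) → s < s₀ → s ∈ I := fun s h1 h2 =>
      ⟨h1, lt_trans (EReal.coe_lt_coe_iff.2 h2) hs₀b⟩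
    have hmem2 : ∀ s : ℝ, -s₀ < s → (s : EReal) < -a → (a < ((-s : ℝ) : EReal) ∧ -s < s₀) := by
      intro s h1 h2
      constructor
      · rw [EReal.coe_neg]
        exact EReal.lt_neg_of_lt_neg h2
      · linarith
    have hεneg : -ε = 1 ∨ -ε = -1 := by
      rcases hε with h | h
      · right; rw [h]
      · left; rw [h]; ring
    obtain ⟨aR', haR', L, hLt, hL1, hL2⟩ := core M hM δ R hδ hR2 hδR (-a) (-s₀)
      (by rw [EReal.coe_neg]; exact EReal.neg_lt_neg_iff.2 hs₀a)
      (fun σ => t (-σ)) (fun σ => -t' (-σ)) (fun σ => x (-σ)) (fun σ => -x' (-σ)) (-ε) hεneg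
      (fun s hs1 hs2 => by
        obtain ⟨ha1, ha2⟩ := hmem2 s hs1 hs2
        have hsI : (-s : ℝ) ∈ I := hmemI (-s) ha1 ha2
        refine ⟨hasDerivAt_comp_neg (hder (-s) hsI).1, hasDerivAt_comp_neg (hder (-s) hsI).2,
          (hbound (-s) ha1 ha2).1, (hbound (-s) ha1 ha2).2, ?_, ?_⟩
        · rw [QM_neg]
          exact hQ (-s) hsI.1 hsI.2
        · rw [inner_neg_right]
          have := (hsign (-s) hsI).le
          rw [hp_def] at this
          dsimp only at this
          nlinarith [this])
    -- a is finite
    have haR : a = ((-aR' : ℝ) : EReal) := by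
      rw [EReal.coe_neg, ← haR', neg_neg]
    set aR : ℝ := -aR' with haR_def
    have haRs₀ : aR < s₀ := by
      have := hs₀a
      rw [haR] at this
      exact_mod_cast EReal.coe_lt_coe_iff.1 this
    have haRnotI : aR ∉ I := fun h => absurd h.1 (by rw [haR]; exact lt_irrefl _)
    have hIooI : Ioo aR s₀ ⊆ I := fun σ hσ =>
      ⟨by rw [haR]; exact EReal.coe_lt_coe_iff.2 hσ.1, lt_trans (EReal.coe_lt_coe_iff.2 hσ.2) hs₀b⟩
    -- transfer the limit
    have hnegt : Tendsto (fun σ : ℝ => -σ) (𝓝[Ioo aR s₀] aR) (𝓝[Ioo (-s₀) aR'] aR') := by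
      have h1 : Tendsto (fun σ : ℝ => -σ) (𝓝 aR) (𝓝 aR') := by
        have := (continuous_neg.tendsto aR)
        rwa [haR_def, neg_neg] at this
      refine Tendsto.inf h1 (tendsto_principal_principal.2 ?_)
      intro σ hσ
      exact ⟨by linarith [hσ.2], by rw [haR_def] at hσ; linarith [hσ.1]⟩
    have hLt2 : Tendsto (fun σ : ℝ => ((t σ, x σ) : ℝ × EuclideanSpace ℝ (Fin 3)))
        (𝓝[Ioo aR s₀] aR) (𝓝 L) := by
      have := hLt.comp hnegt
      apply this.congr
      intro σ
      simp [neg_neg]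
    have hfil2 : 𝓝[I] aR = 𝓝[Ioo aR s₀] aR := by
      apply nhdsWithin_eq_nhdsWithin' (Iio_mem_nhds haRs₀)
      ext σ
      simp only [mem_inter_iff, mem_setOf_eq, mem_Iio, mem_Ioo]
      constructor
      · rintro ⟨⟨h1, h2⟩, h3⟩
        rw [haR] at h1
        exact ⟨⟨EReal.coe_lt_coe_iff.1 h1, h3⟩, h3⟩
      · rintro ⟨⟨h1, h2⟩, h3⟩
        exact ⟨(hIooI ⟨h1, h2⟩ : σ ∈ I), h3⟩
    set γ' : ℝ → ℝ × EuclideanSpace ℝ (Fin 3) :=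
      Function.update (fun s => ((t s, x s) : ℝ × EuclideanSpace ℝ (Fin 3))) aR L with hγ'
    have hγ'eq : ∀ σ ∈ I, γ' σ = (t σ, x σ) := by
      intro σ hσ
      rw [hγ']
      exact Function.update_of_ne (fun hh => haRnotI (by rw [← hh]; exact hσ)) _ _
    apply hinext_a aR haR
    refine ⟨γ', ?_, (fun s h1 h2 => hγ'eq s ⟨h1, h2⟩), ?_, ?_⟩
    · intro σ hσ
      rcases eq_or_ne σ aR with rfl | hne
      · rw [continuousWithinAt_insert_self]
        have hup : γ' aR = L := Function.update_self _ _ _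
        unfold ContinuousWithinAt
        rw [hfil2, hup]
        apply hLt2.congr'
        filter_upwards [self_mem_nhdsWithin] with τ hτ
        exact (hγ'eq τ (hIooI hτ)).symm
      · have hσI : σ ∈ I := hσ.resolve_left hne
        have hca : ContinuousAt (fun s => ((t s, x s) : ℝ × EuclideanSpace ℝ (Fin 3))) σ :=
          ((hder σ hσI).1.prodMk (hder σ hσI).2).continuousAt
        exact (hca.congr (eventually_of_mem (hIopen.mem_nhds hσI)
          (fun τ hτ => (hγ'eq τ hτ).symm))).continuousWithinAt
    · rw [hγ', Function.update_self]; linarith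
    · rw [hγ', Function.update_self]; linarith
  -- existence
  have hex : ∃ s ∈ I, ‖x s‖ = r₀ := by
    by_contra hnex
    push_neg at hnex
    have hdi : (∀ s ∈ I, ‖x s‖ < r₀) ∨ (∀ s ∈ I, r₀ < ‖x s‖) := by
      by_contra hcon
      push_neg at hcon
      obtain ⟨⟨s₁, h1, hge⟩, ⟨s₂, h2, hle⟩⟩ := hcon
      have hrc : ContinuousOn (fun s => ‖x s‖) I := hxc.norm
      have himg := hIconn.intermediate_value h2 h1 hrc
      obtain ⟨σ, hσI, hσr⟩ := himg ⟨hle, hge⟩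
      exact hnex σ hσI hσr
    rcases hdi with hlt | hgt
    · rcases hε with hε1 | hεm
      · -- increasing, below r₀: contradiction at b
        apply hcoreB ‖x s₀‖ r₀ (hr s₀ hs₀a hs₀b).1 hr₀' (hlt s₀ hs₀I).le
        intro s h1 h2
        have hsI : s ∈ I := ⟨hs₀a.trans (EReal.coe_lt_coe_iff.2 h1), h2⟩
        have := hmono s₀ hs₀I s hsI h1
        rw [hε1, one_mul, one_mul] at this
        exact ⟨this.le, (hlt s hsI).le⟩
      · -- decreasing, below r₀: contradiction at a
        apply hcoreA ‖x s₀‖ r₀ (hr s₀ hs₀a hs₀b).1 hr₀' (hlt s₀ hs₀I).le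
        intro s h1 h2
        have hsI : s ∈ I := ⟨h1, lt_trans (EReal.coe_lt_coe_iff.2 h2) hs₀b⟩
        have := hmono s hsI s₀ hs₀I h2
        rw [hεm] at this
        have h3 : ‖x s₀‖ < ‖x s‖ := by nlinarith
        exact ⟨h3.le, (hlt s hsI).le⟩
    · rcases hε with hε1 | hεm
      · -- increasing, above r₀: contradiction at a
        apply hcoreA r₀ ‖x s₀‖ hr₀ (hr s₀ hs₀a hs₀b).2 (hgt s₀ hs₀I).le
        intro s h1 h2
        have hsI : s ∈ I := ⟨h1, lt_trans (EReal.coe_lt_coe_iff.2 h2) hs₀b⟩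
        have := hmono s hsI s₀ hs₀I h2
        rw [hε1, one_mul, one_mul] at this
        exact ⟨(hgt s hsI).le, this.le⟩
      · -- decreasing, above r₀: contradiction at b
        apply hcoreB r₀ ‖x s₀‖ hr₀ (hr s₀ hs₀a hs₀b).2 (hgt s₀ hs₀I).le
        intro s h1 h2
        have hsI : s ∈ I := ⟨hs₀a.trans (EReal.coe_lt_coe_iff.2 h1), h2⟩
        have := hmono s₀ hs₀I s hsI h1
        rw [hεm] at this
        have h3 : ‖x s‖ < ‖x s₀‖ := by nlinarith
        exact ⟨(hgt s hsI).le, h3.le⟩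
  obtain ⟨s, hsI, hsr⟩ := hex
  refine ⟨s, ⟨⟨hsI.1, hsI.2⟩, hsr⟩, ?_⟩
  rintro s' ⟨⟨h1, h2⟩, hr'⟩
  exact huniq s' ⟨h1, h2⟩ s hsI hr' hsr
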